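/- Let Y₁ = (1/5)(3,4,0,0,0,−6), Y₂ = (1/5)(0,3,4,16,0,0), Y₃ = (1/5)(−3,4,0,0,0,6), Y₄ = (0,0,1,0,0,0), Y₅ = −(1/5)(4,3,0,0,0,8), Y₆ = (1/5)(0,−3,4,−16,0,0), Y₇ = (1/5)(4,−3,0,0,0,8) in ℝ⁶. Then the solution set of the first-order loop constraint {x ∈ ℝ⁷ : x₁Y₁ + x₂Y₂ + x₃Y₃ + x₄Y₄ + x₅Y₅ + x₆Y₆ + x₇Y₇ = 0} is exactly the two-dimensional subspace {(s, t, s, −(8/5)t, (4/3)s, t, (4/3)s) : s, t ∈ ℝ}. -/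
import Mathlib


/-- Joint screw coordinate vectors of the 7R linkage in the reference configuration. -/
noncomputable def Y1 : Fin 6 → ℝ := ![3/5, 4/5, 0, 0, 0, -6/5]
noncomputable def Y2 : Fin 6 → ℝ := ![0, 3/5, 4/5, 16/5, 0, 0]
noncomputable def Y3 : Fin 6 → ℝ := ![-3/5, 4/5, 0, 0, 0, 6/5]
noncomputable def Y4 : Fin 6 → ℝ := ![0, 0, 1, 0, 0, 0]
noncomputable def Y5 : Fin 6 → ℝ := ![-4/5, -3/5, 0, 0, 0, -8/5]
noncomputable def Y6 : Fin 6 → ℝ := ![0, -3/5, 4/5, -16/5, 0, 0]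
noncomputable def Y7 : Fin 6 → ℝ := ![4/5, -3/5, 0, 0, 0, 8/5]


lemma cons_val_five' {α : Type*} {m : ℕ} (x : α) (u : Fin m.succ.succ.succ.succ.succ → α) :
    Matrix.vecCons x u 5 =
      Matrix.vecHead (Matrix.vecTail (Matrix.vecTail (Matrix.vecTail (Matrix.vecTail u)))) :=
  rfl

lemma cons_val_six' {α : Type*} {m : ℕ} (x : α)
    (u : Fin m.succ.succ.succ.succ.succ.succ → α) :
    Matrix.vecCons x u 6 =
      Matrix.vecHead (Matrix.vecTail (Matrix.vecTail (Matrix.vecTail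
        (Matrix.vecTail (Matrix.vecTail u))))) :=
  rfl

set_option maxHeartbeats 1000000 in
/-- The solution set of the first-order loop constraint of the 7R linkage at the singular
reference configuration is the 2-dimensional subspace
`{(s, t, s, −(8/5)t, (4/3)s, t, (4/3)s) : s, t ∈ ℝ}`. -/
theorem firstOrderCone_7R :
    {x : Fin 7 → ℝ |
        x 0 • Y1 + x 1 • Y2 + x 2 • Y3 + x 3 • Y4 + x 4 • Y5 + x 5 • Y6 + x 6 • Y7 = 0} =
      {x : Fin 7 → ℝ | ∃ s t : ℝ,
        x = ![s, t, s, -(8/5) * t, (4/3) * s, t, (4/3) * s]} := by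
  ext x
  simp only [Set.mem_setOf_eq]
  constructor
  · intro h
    have h0 := congrFun h 0
    have h1 := congrFun h 1
    have h2 := congrFun h 2
    have h3 := congrFun h 3
    have h5 := congrFun h 5
    simp [Y1, Y2, Y3, Y4, Y5, Y6, Y7, Matrix.cons_val_succ, cons_val_five', cons_val_six'] at h0 h1 h2 h3 h5
    refine ⟨x 0, x 1, ?_⟩
    funext i
    fin_cases i <;> simp [Matrix.cons_val_succ, cons_val_five', cons_val_six'] <;> linarith
  · rintro ⟨s, t, rfl⟩
    funext i
    fin_cases i <;> simp [Y1, Y2, Y3, Y4, Y5, Y6, Y7, Matrix.cons_val_succ, cons_val_five', cons_val_six'] <;> ring
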